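/- For the tree-indexed Markov chain X, with γ_j = 2ν_{1,j}({(1,1)}) + ν_{1,j}({(1,0),(0,1)}) and η_j = 1 − ν_{0,j}({(0,0)}), the expected number of state-1 vertices satisfies E[#S_j | F_{j−1}] ≤ 2^j η_{j−1} + γ_{j−1}·#S_{j−1} for every j ≥ 1, and consequently E[#S_j] ≤ Σ_{k=−1}^{j−1} 2^{k+1} η_k ∏_{ℓ=k+1}^{j−1} γ_ℓ (with the convention η_{−1} = 1). -/

import Mathlib

open MeasureTheory
open scoped ENNReal

/-- The finite set of binary words of length `j` (the generation-`j` vertices of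
the binary tree). -/
def words (j : ℕ) : Finset (List Bool) :=
  Finset.image (fun f : Fin j → Bool => List.ofFn f) Finset.univ

/-- `v` is a strict descendant of `u` in the binary tree (`v ∈ uU*`). -/
def StrictDesc (u v : List Bool) : Prop := u <+: v ∧ u ≠ v

/-- The σ-field generated by the states `X_v`, for `v` in a set `V` of vertices. -/
def genField {Ω : Type*} [MeasurableSpace Ω] (X : List Bool → Ω → Bool)
    (V : Set (List Bool)) : MeasurableSpace Ω :=
  ⨆ v ∈ V, MeasurableSpace.comap (X v) ⊤

/-- The "past" σ-field `G_u = σ(X_v, v ∉ uU*)`. -/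
def pastField {Ω : Type*} [MeasurableSpace Ω] (X : List Bool → Ω → Bool)
    (u : List Bool) : MeasurableSpace Ω :=
  genField X {v | ¬ StrictDesc u v}

/-- The σ-field `F_j` generated by the states of vertices of generation at most `j`. -/
def upToField {Ω : Type*} [MeasurableSpace Ω] (X : List Bool → Ω → Bool)
    (j : ℕ) : MeasurableSpace Ω :=
  genField X {v | v.length ≤ j}

/-- The Markov condition: conditionally on the past `G_u`, the pair of states
`(X_{u0}, X_{u1})` has law `ν_{X_u, j(u)}`. -/
def MarkovCond {Ω : Type*} [MeasurableSpace Ω] (μ : Measure Ω)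
    (X : List Bool → Ω → Bool) (ν : Bool → ℕ → Measure (Bool × Bool)) : Prop :=
  ∀ u : List Bool, ∀ A : Set (Bool × Bool), ∀ B : Set Ω,
    MeasurableSet[pastField X u] B →
    μ (B ∩ {ω | (X (u ++ [false]) ω, X (u ++ [true]) ω) ∈ A}) =
      ∫⁻ ω in B, ν (X u ω) u.length A ∂μ

/-- `#S_j`: the number of generation-`j` vertices in state `1`. -/
noncomputable def Scard {Ω : Type*} (X : List Bool → Ω → Bool) (j : ℕ) (ω : Ω) : ℕ :=
  ((words j).filter fun u => X u ω = true).card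

/-- `#S̃_j`: the number of generation-`j` vertices in state `1` whose parent is
in state `0`. -/
noncomputable def Stcard {Ω : Type*} (X : List Bool → Ω → Bool) (j : ℕ) (ω : Ω) : ℕ :=
  ((words j).filter fun u => X u ω = true ∧ X u.dropLast ω = false).card

/-- `γ_j = 2 ν_{1,j}({(1,1)}) + ν_{1,j}({(1,0),(0,1)})`. -/
noncomputable def gammaCoef (ν : Bool → ℕ → Measure (Bool × Bool)) (j : ℕ) : ℝ :=
  2 * (ν true j {((true, true) : Bool × Bool)}).toReal +
    (ν true j {((true, false) : Bool × Bool), ((false, true) : Bool × Bool)}).toReal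

/-- `η_j = 1 − ν_{0,j}({(0,0)})`. -/
noncomputable def etaCoef (ν : Bool → ℕ → Measure (Bool × Bool)) (j : ℕ) : ℝ :=
  1 - (ν false j {((false, false) : Bool × Bool)}).toReal

section AuxSTMT9

lemma mem_words {u : List Bool} {j : ℕ} : u ∈ words j ↔ u.length = j := by
  constructor
  · intro h
    simp only [words, Finset.mem_image] at h
    obtain ⟨f, -, rfl⟩ := h
    simp
  · intro h
    subst h
    simp only [words, Finset.mem_image]
    exact ⟨u.get, Finset.mem_univ _, List.ofFn_get u⟩

lemma card_words (j : ℕ) : (words j).card = 2 ^ j := by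
  rw [words, Finset.card_image_of_injective _ List.ofFn_injective]
  simp [Finset.card_univ]

lemma scard_le {Ω : Type*} (X : List Bool → Ω → Bool) (j : ℕ) (ω : Ω) :
    Scard X j ω ≤ 2 ^ j := by
  rw [← card_words j]; exact Finset.card_filter_le _ _

lemma scard_cast {Ω : Type*} (X : List Bool → Ω → Bool) (j : ℕ) (ω : Ω) :
    ((Scard X j ω : ℕ) : ℝ≥0∞) = ∑ w ∈ words j, (if X w ω = true then (1:ℝ≥0∞) else 0) := by
  rw [Scard, Finset.card_filter, Nat.cast_sum]
  exact Finset.sum_congr rfl fun w _ => by split <;> simp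

lemma words_succ (j : ℕ) : words (j+1)
    = ((words j) ×ˢ (Finset.univ : Finset Bool)).image (fun p => p.1 ++ [p.2]) := by
  ext u
  simp only [mem_words, Finset.mem_image, Finset.mem_product, Finset.mem_univ, and_true]
  constructor
  · intro h
    have hne : u ≠ [] := by intro h'; simp [h'] at h
    refine ⟨⟨u.dropLast, u.getLast hne⟩, ?_, List.dropLast_append_getLast hne⟩
    simp [List.length_dropLast, h]
  · rintro ⟨⟨w, b⟩, hw, rfl⟩
    simp [hw]

lemma append_last_injective : Function.Injective (fun p : List Bool × Bool => p.1 ++ [p.2]) := by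
  rintro ⟨w, b⟩ ⟨w', b'⟩ h
  simp only at h
  obtain ⟨h1, h2⟩ := List.append_inj' h (by simp)
  simp_all

lemma scard_succ {Ω : Type*} (X : List Bool → Ω → Bool) (j : ℕ) (ω : Ω) :
    ((Scard X (j+1) ω : ℕ) : ℝ≥0∞) = ∑ w ∈ words j,
      ((if X (w ++ [false]) ω = true then (1:ℝ≥0∞) else 0)
        + (if X (w ++ [true]) ω = true then (1:ℝ≥0∞) else 0)) := by
  rw [Scard, words_succ, Finset.filter_image,
    Finset.card_image_of_injective _ append_last_injective, Finset.card_filter, Nat.cast_sum,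
    Finset.sum_product]
  refine Finset.sum_congr rfl fun w _ => ?_
  rw [Fintype.sum_bool]
  rw [add_comm]
  congr 1 <;> split <;> simp

variable {Ω : Type*} [MeasurableSpace Ω] {X : List Bool → Ω → Bool}

lemma genField_le (hX : ∀ u, Measurable (X u)) (V : Set (List Bool)) :
    genField X V ≤ ‹MeasurableSpace Ω› := by
  refine iSup₂_le fun v _ => ?_
  rintro s ⟨t, -, rfl⟩
  exact hX v trivial

lemma genField_mono {V W : Set (List Bool)} (h : V ⊆ W) : genField X V ≤ genField X W :=
  biSup_mono h

lemma measurable_X_genField {V : Set (List Bool)} {v : List Bool} (hv : v ∈ V) :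
    Measurable[genField X V] (X v) := by
  rw [measurable_iff_comap_le]
  exact le_iSup₂ (f := fun (v : List Bool) (_ : v ∈ V) => MeasurableSpace.comap (X v) ⊤) v hv

lemma upToField_le_pastField {j : ℕ} {w : List Bool} (hw : w.length = j) :
    upToField X j ≤ pastField X w := by
  refine genField_mono fun v hv => ?_
  rintro ⟨hpre, hne⟩
  have h1 : w.length ≤ v.length := hpre.length_le
  have h2 : v.length ≤ j := hv
  exact hne (List.IsPrefix.eq_of_length hpre (le_antisymm h1 (hw ▸ h2)))

lemma measurable_X_upTo {j : ℕ} {w : List Bool} (hw : w.length ≤ j) :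
    Measurable[upToField X j] (X w) :=
  measurable_X_genField hw

noncomputable def gamE (ν : Bool → ℕ → Measure (Bool × Bool)) (j : ℕ) : ℝ≥0∞ :=
  2 * ν true j {((true,true) : Bool × Bool)}
    + ν true j {((true,false) : Bool × Bool), ((false,true) : Bool × Bool)}

noncomputable def etaE (ν : Bool → ℕ → Measure (Bool × Bool)) (j : ℕ) : ℝ≥0∞ :=
  1 - ν false j {((false,false) : Bool × Bool)}

section Meas
variable {Ω : Type*} {X : List Bool → Ω → Bool} {j : ℕ}

lemma measurable_scard_nat {m : MeasurableSpace Ω}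
    (hXm : ∀ w, w ∈ words j → Measurable[m] (X w)) : Measurable[m] (Scard X j) := by
  have h : Scard X j = fun ω => ∑ w ∈ words j, (if X w ω = true then 1 else 0) := by
    funext ω; rw [Scard, Finset.card_filter]
  rw [h]
  refine Finset.measurable_sum _ fun w hw => Measurable.ite ?_ measurable_const measurable_const
  exact hXm w hw (show MeasurableSet {b : Bool | b = true} from trivial)

lemma measurable_scard_enn {m : MeasurableSpace Ω}
    (hXm : ∀ w, w ∈ words j → Measurable[m] (X w)) :
    Measurable[m] (fun ω => ((Scard X j ω : ℕ) : ℝ≥0∞)) :=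
  measurable_from_top.comp (measurable_scard_nat hXm)

lemma measurable_scard_real {m : MeasurableSpace Ω}
    (hXm : ∀ w, w ∈ words j → Measurable[m] (X w)) :
    Measurable[m] (fun ω => ((Scard X j ω : ℕ) : ℝ)) :=
  measurable_from_top.comp (measurable_scard_nat hXm)
end Meas

lemma nu_bound {ν : Bool → ℕ → Measure (Bool × Bool)}
    (hν : ∀ b j, IsProbabilityMeasure (ν b j)) (j : ℕ) (b : Bool) :
    ν b j {p : Bool × Bool | p.1 = true} + ν b j {p : Bool × Bool | p.2 = true}
      ≤ if b = true then gamE ν j else 2 * etaE ν j := by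
  have hmeas : ∀ s : Set (Bool × Bool), MeasurableSet s := fun s => (Set.toFinite s).measurableSet
  cases b
  · simp only [Bool.false_eq_true, if_false]
    have hc : ν false j ({((false,false) : Bool × Bool)})ᶜ = etaE ν j := by
      have := hν false j
      rw [prob_compl_eq_one_sub (hmeas _)]; rfl
    have h1 : ν false j {p : Bool × Bool | p.1 = true}
        ≤ ν false j ({((false,false) : Bool × Bool)})ᶜ := by
      refine measure_mono fun p hp => ?_
      rcases p with ⟨a, c⟩
      simp only [Set.mem_setOf_eq] at hp
      simp [hp]
    have h2 : ν false j {p : Bool × Bool | p.2 = true}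
        ≤ ν false j ({((false,false) : Bool × Bool)})ᶜ := by
      refine measure_mono fun p hp => ?_
      rcases p with ⟨a, c⟩
      simp only [Set.mem_setOf_eq] at hp
      simp [hp]
    calc ν false j {p : Bool × Bool | p.1 = true} + ν false j {p : Bool × Bool | p.2 = true}
        ≤ ν false j ({((false,false) : Bool × Bool)})ᶜ
          + ν false j ({((false,false) : Bool × Bool)})ᶜ := add_le_add h1 h2
      _ = 2 * etaE ν j := by rw [hc, two_mul]
  · simp only [if_true]
    have e1 : {p : Bool × Bool | p.1 = true}
        = ({((true,true) : Bool × Bool)} ∪ {((true,false) : Bool × Bool)}) := by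
      ext ⟨a, c⟩; cases a <;> cases c <;> simp
    have e2 : {p : Bool × Bool | p.2 = true}
        = ({((true,true) : Bool × Bool)} ∪ {((false,true) : Bool × Bool)}) := by
      ext ⟨a, c⟩; cases a <;> cases c <;> simp
    have e3 : ({((true,false) : Bool × Bool), ((false,true) : Bool × Bool)} : Set (Bool × Bool))
        = ({((true,false) : Bool × Bool)} ∪ {((false,true) : Bool × Bool)}) := by
      rw [Set.insert_eq]
    have d1 : Disjoint ({((true,true) : Bool × Bool)} : Set (Bool × Bool)) {((true,false) : Bool × Bool)} := by
      simp
    have d2 : Disjoint ({((true,true) : Bool × Bool)} : Set (Bool × Bool)) {((false,true) : Bool × Bool)} := by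
      simp
    have d3 : Disjoint ({((true,false) : Bool × Bool)} : Set (Bool × Bool)) {((false,true) : Bool × Bool)} := by
      simp
    rw [e1, e2, measure_union d1 (hmeas _), measure_union d2 (hmeas _)]
    rw [gamE, e3, measure_union d3 (hmeas _)]
    ring_nf
    exact le_of_eq (by ring)


section Key
variable {Ω : Type*} [MeasurableSpace Ω] {μ : Measure Ω} {X : List Bool → Ω → Bool}
  {ν : Bool → ℕ → Measure (Bool × Bool)}

lemma key_lintegral (hX : ∀ u, Measurable (X u))
    (hν : ∀ b j, IsProbabilityMeasure (ν b j)) (hM : MarkovCond μ X ν) (j : ℕ)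
    {B : Set Ω} (hB : MeasurableSet[upToField X j] B) :
    ∫⁻ ω in B, ((Scard X (j+1) ω : ℕ) : ℝ≥0∞) ∂μ
      ≤ 2^(j+1) * etaE ν j * μ B
        + gamE ν j * ∫⁻ ω in B, ((Scard X j ω : ℕ) : ℝ≥0∞) ∂μ := by
  have hXset : ∀ u : List Bool, MeasurableSet {ω | X u ω = true} := fun u =>
    hX u (show MeasurableSet {b : Bool | b = true} from trivial)
  have hmeas_ind : ∀ u : List Bool,
      Measurable fun ω => (if X u ω = true then (1:ℝ≥0∞) else 0) := fun u =>
    Measurable.ite (hXset u) measurable_const measurable_const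
  have hmeas_nu : ∀ (w : List Bool) (A : Set (Bool × Bool)),
      Measurable fun ω => ν (X w ω) j A := fun w A =>
    (measurable_from_top (f := fun b => ν b j A)).comp (hX w)
  have hmeas_ite : ∀ w : List Bool,
      Measurable fun ω => (if X w ω = true then gamE ν j else 2 * etaE ν j) := fun w =>
    Measurable.ite (hXset w) measurable_const measurable_const
  have hind : ∀ u : List Bool, ∫⁻ ω in B, (if X u ω = true then (1:ℝ≥0∞) else 0) ∂μ
      = μ (B ∩ {ω | X u ω = true}) := by
    intro u
    rw [show (fun ω => if X u ω = true then (1:ℝ≥0∞) else 0)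
        = Set.indicator {ω | X u ω = true} (fun _ => 1) from funext fun ω => by
          simp [Set.indicator_apply, Set.mem_setOf_eq]]
    rw [lintegral_indicator (hXset u), Measure.restrict_restrict (hXset u),
      setLIntegral_one, Set.inter_comm]
  have hmark : ∀ w ∈ words j,
      μ (B ∩ {ω | X (w ++ [false]) ω = true}) + μ (B ∩ {ω | X (w ++ [true]) ω = true})
        = ∫⁻ ω in B, (ν (X w ω) j {p : Bool × Bool | p.1 = true}
            + ν (X w ω) j {p : Bool × Bool | p.2 = true}) ∂μ := by
    intro w hw
    have hw' := mem_words.mp hw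
    have hB' : MeasurableSet[pastField X w] B := upToField_le_pastField hw' B hB
    have h1 := hM w {p : Bool × Bool | p.1 = true} B hB'
    have h2 := hM w {p : Bool × Bool | p.2 = true} B hB'
    rw [hw'] at h1 h2
    rw [lintegral_add_left (hmeas_nu w _), ← h1, ← h2]
    rfl
  have hScard_meas : Measurable fun ω => ((Scard X j ω : ℕ) : ℝ≥0∞) :=
    measurable_scard_enn fun w _ => hX w
  calc ∫⁻ ω in B, ((Scard X (j+1) ω : ℕ) : ℝ≥0∞) ∂μ
      = ∑ w ∈ words j, ∫⁻ ω in B, ((if X (w ++ [false]) ω = true then (1:ℝ≥0∞) else 0)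
          + (if X (w ++ [true]) ω = true then (1:ℝ≥0∞) else 0)) ∂μ := by
        simp_rw [scard_succ]
        exact lintegral_finset_sum' _ fun w _ => ((hmeas_ind _).add (hmeas_ind _)).aemeasurable
    _ = ∑ w ∈ words j, ∫⁻ ω in B, (ν (X w ω) j {p : Bool × Bool | p.1 = true}
          + ν (X w ω) j {p : Bool × Bool | p.2 = true}) ∂μ := by
        refine Finset.sum_congr rfl fun w hw => ?_
        rw [lintegral_add_left (hmeas_ind _), hind, hind, hmark w hw]
    _ ≤ ∑ w ∈ words j, ∫⁻ ω in B, (if X w ω = true then gamE ν j else 2 * etaE ν j) ∂μ :=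
        Finset.sum_le_sum fun w _ => lintegral_mono fun ω => nu_bound hν j (X w ω)
    _ = ∫⁻ ω in B, (∑ w ∈ words j, if X w ω = true then gamE ν j else 2 * etaE ν j) ∂μ :=
        (lintegral_finset_sum' _ fun w _ => (hmeas_ite w).aemeasurable).symm
    _ ≤ ∫⁻ ω in B, (2^(j+1) * etaE ν j + gamE ν j * ((Scard X j ω : ℕ) : ℝ≥0∞)) ∂μ := by
        refine lintegral_mono fun ω => ?_
        calc (∑ w ∈ words j, if X w ω = true then gamE ν j else 2 * etaE ν j)
            ≤ ∑ w ∈ words j, (2 * etaE ν j + gamE ν j * (if X w ω = true then 1 else 0)) := by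
              refine Finset.sum_le_sum fun w _ => ?_
              split
              · rw [mul_one]; exact le_add_self
              · rw [mul_zero, add_zero]
          _ = (words j).card • (2 * etaE ν j)
                + gamE ν j * ∑ w ∈ words j, (if X w ω = true then (1:ℝ≥0∞) else 0) := by
              rw [Finset.sum_add_distrib, Finset.sum_const, Finset.mul_sum]
          _ = 2^(j+1) * etaE ν j + gamE ν j * ((Scard X j ω : ℕ) : ℝ≥0∞) := by
              rw [← scard_cast, card_words, nsmul_eq_mul]
              congr 1
              push_cast
              ring
    _ = 2^(j+1) * etaE ν j * μ B
        + gamE ν j * ∫⁻ ω in B, ((Scard X j ω : ℕ) : ℝ≥0∞) ∂μ := by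
        rw [lintegral_add_left measurable_const, lintegral_const_mul _ hScard_meas,
          setLIntegral_const]
end Key

section Fin
variable {ν : Bool → ℕ → Measure (Bool × Bool)} {j : ℕ}

lemma etaE_ne_top : etaE ν j ≠ ∞ :=
  ((tsub_le_self).trans_lt (by norm_num : (1:ℝ≥0∞) < ∞)).ne

lemma gamE_ne_top (hν : ∀ b j, IsProbabilityMeasure (ν b j)) : gamE ν j ≠ ∞ := by
  have := hν true j
  exact ENNReal.add_ne_top.2 ⟨ENNReal.mul_ne_top ENNReal.ofNat_ne_top (measure_ne_top _ _),
    measure_ne_top _ _⟩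

lemma etaE_toReal (hν : ∀ b j, IsProbabilityMeasure (ν b j)) :
    (etaE ν j).toReal = etaCoef ν j := by
  have := hν false j
  rw [etaE, etaCoef, ENNReal.toReal_sub_of_le prob_le_one ENNReal.one_ne_top, ENNReal.toReal_one]

lemma gamE_toReal (hν : ∀ b j, IsProbabilityMeasure (ν b j)) :
    (gamE ν j).toReal = gammaCoef ν j := by
  have := hν true j
  rw [gamE, gammaCoef, ENNReal.toReal_add (ENNReal.mul_ne_top ENNReal.ofNat_ne_top
    (measure_ne_top _ _)) (measure_ne_top _ _), ENNReal.toReal_mul, ENNReal.toReal_ofNat]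
end Fin

noncomputable def rhsE (ν : Bool → ℕ → Measure (Bool × Bool)) (j : ℕ) : ℝ≥0∞ :=
  ∑ k ∈ Finset.range (j + 1),
    2 ^ k * (if k = 0 then 1 else etaE ν (k - 1)) * ∏ ℓ ∈ Finset.Ico k j, gamE ν ℓ

lemma rhsE_ne_top {ν : Bool → ℕ → Measure (Bool × Bool)}
    (hν : ∀ b j, IsProbabilityMeasure (ν b j)) (j : ℕ) : rhsE ν j ≠ ∞ := by
  rw [rhsE]
  rw [← lt_top_iff_ne_top, ENNReal.sum_lt_top]
  intro k _
  rw [lt_top_iff_ne_top]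
  refine ENNReal.mul_ne_top (ENNReal.mul_ne_top (ENNReal.pow_ne_top ENNReal.ofNat_ne_top) ?_)
    (ENNReal.prod_ne_top fun ℓ _ => gamE_ne_top hν)
  split
  · exact ENNReal.one_ne_top
  · exact etaE_ne_top

lemma rhsE_toReal {ν : Bool → ℕ → Measure (Bool × Bool)}
    (hν : ∀ b j, IsProbabilityMeasure (ν b j)) (j : ℕ) :
    (rhsE ν j).toReal = ∑ k ∈ Finset.range (j + 1),
      2 ^ k * (if k = 0 then 1 else etaCoef ν (k - 1)) *
        ∏ ℓ ∈ Finset.Ico k j, gammaCoef ν ℓ := by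
  rw [rhsE, ENNReal.toReal_sum (fun k _ => by
    refine ENNReal.mul_ne_top (ENNReal.mul_ne_top (ENNReal.pow_ne_top ENNReal.ofNat_ne_top) ?_)
      (ENNReal.prod_ne_top fun ℓ _ => gamE_ne_top hν)
    split
    · exact ENNReal.one_ne_top
    · exact etaE_ne_top)]
  refine Finset.sum_congr rfl fun k _ => ?_
  rw [ENNReal.toReal_mul, ENNReal.toReal_mul, ENNReal.toReal_pow, ENNReal.toReal_ofNat,
    ENNReal.toReal_prod, apply_ite ENNReal.toReal, ENNReal.toReal_one, etaE_toReal hν]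
  congr 1
  exact Finset.prod_congr rfl fun ℓ _ => gamE_toReal hν

section Main
variable {Ω : Type*} [MeasurableSpace Ω] {μ : Measure Ω} {X : List Bool → Ω → Bool}
  {ν : Bool → ℕ → Measure (Bool × Bool)}

lemma lintegral_scard_le (hX : ∀ u, Measurable (X u)) (j : ℕ) (B : Set Ω) :
    ∫⁻ ω in B, ((Scard X j ω : ℕ) : ℝ≥0∞) ∂μ ≤ 2 ^ j * μ B := by
  calc ∫⁻ ω in B, ((Scard X j ω : ℕ) : ℝ≥0∞) ∂μ
      ≤ ∫⁻ _ω in B, (((2:ℕ) ^ j : ℕ) : ℝ≥0∞) ∂μ :=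
        lintegral_mono fun ω => Nat.cast_le.2 (scard_le X j ω)
    _ = 2 ^ j * μ B := by rw [setLIntegral_const]; push_cast; ring

lemma lintegral_scard_bound [IsProbabilityMeasure μ] (hX : ∀ u, Measurable (X u))
    (hν : ∀ b j, IsProbabilityMeasure (ν b j)) (hM : MarkovCond μ X ν) (j : ℕ) :
    ∫⁻ ω, ((Scard X j ω : ℕ) : ℝ≥0∞) ∂μ ≤ rhsE ν j := by
  induction j with
  | zero =>
      have h := lintegral_scard_le (μ := μ) hX 0 Set.univ
      rw [Measure.restrict_univ, measure_univ, pow_zero, one_mul] at h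
      refine h.trans ?_
      rw [rhsE]
      simp
  | succ j ih =>
      have hkey := key_lintegral hX hν hM j (B := Set.univ)
        (@MeasurableSet.univ Ω (upToField X j))
      rw [Measure.restrict_univ, measure_univ, mul_one] at hkey
      have hstep : rhsE ν (j + 1) = gamE ν j * rhsE ν j + 2 ^ (j + 1) * etaE ν j := by
        rw [rhsE, Finset.sum_range_succ]
        congr 1
        · rw [rhsE, Finset.mul_sum]
          refine Finset.sum_congr rfl fun k hk => ?_
          rw [Finset.prod_Ico_succ_top (Nat.lt_succ_iff.mp (Finset.mem_range.mp hk))]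
          ring
        · simp [Finset.Ico_self]
      calc ∫⁻ ω, ((Scard X (j + 1) ω : ℕ) : ℝ≥0∞) ∂μ
          ≤ 2 ^ (j + 1) * etaE ν j + gamE ν j * ∫⁻ ω, ((Scard X j ω : ℕ) : ℝ≥0∞) ∂μ := hkey
        _ ≤ 2 ^ (j + 1) * etaE ν j + gamE ν j * rhsE ν j :=
            add_le_add_right (mul_le_mul_right ih _) _
        _ = rhsE ν (j + 1) := by rw [hstep, add_comm]

lemma integral_scard_eq (hX : ∀ u, Measurable (X u)) (j : ℕ) (μ' : Measure Ω) :
    ∫ ω, ((Scard X j ω : ℕ) : ℝ) ∂μ' = (∫⁻ ω, ((Scard X j ω : ℕ) : ℝ≥0∞) ∂μ').toReal := by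
  rw [integral_eq_lintegral_of_nonneg_ae (Filter.Eventually.of_forall fun ω => Nat.cast_nonneg _)
    ((measurable_scard_real fun w _ => hX w).aestronglyMeasurable)]
  congr 1
  exact lintegral_congr fun ω => ENNReal.ofReal_natCast _

lemma integrable_scard [IsFiniteMeasure μ] (hX : ∀ u, Measurable (X u)) (j : ℕ) :
    Integrable (fun ω => ((Scard X j ω : ℕ) : ℝ)) μ := by
  refine Integrable.mono' (integrable_const ((2 ^ j : ℕ) : ℝ))
    ((measurable_scard_real fun w _ => hX w).aestronglyMeasurable)
    (Filter.Eventually.of_forall fun ω => ?_)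
  rw [Real.norm_natCast]
  exact_mod_cast scard_le X j ω
end Main

end AuxSTMT9

/-- `E[#S_j | F_{j−1}] ≤ 2^j η_{j−1} + γ_{j−1} #S_{j−1}` a.e. for every
`j ≥ 1`, and consequently
`E[#S_j] ≤ Σ_{k=−1}^{j−1} 2^{k+1} η_k ∏_{ℓ=k+1}^{j−1} γ_ℓ` (with `η_{−1} = 1`;
the sum is reindexed by `k+1 ∈ {0,…,j}`). -/
theorem stmt9 {Ω : Type*} [MeasurableSpace Ω] (μ : Measure Ω) [IsProbabilityMeasure μ]
    (X : List Bool → Ω → Bool) (hX : ∀ u, Measurable (X u))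
    (ν : Bool → ℕ → Measure (Bool × Bool)) (hν : ∀ b j, IsProbabilityMeasure (ν b j))
    (hM : MarkovCond μ X ν) :
    (∀ j : ℕ, 1 ≤ j → ∀ᵐ ω ∂μ,
      (μ[(fun ω' => (Scard X j ω' : ℝ)) | upToField X (j - 1)]) ω ≤
        2 ^ j * etaCoef ν (j - 1) + gammaCoef ν (j - 1) * (Scard X (j - 1) ω : ℝ)) ∧
    ∀ j : ℕ, ∫ ω, (Scard X j ω : ℝ) ∂μ ≤
      ∑ k ∈ Finset.range (j + 1),
        2 ^ k * (if k = 0 then 1 else etaCoef ν (k - 1)) *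
          ∏ ℓ ∈ Finset.Ico k j, gammaCoef ν ℓ := by
  constructor
  · intro j hj
    obtain ⟨i, rfl⟩ := Nat.exists_eq_succ_of_ne_zero (by omega : j ≠ 0)
    simp only [Nat.succ_sub_one]
    have hm : upToField X i ≤ ‹MeasurableSpace Ω› := genField_le hX _
    haveI : SigmaFinite (μ.trim hm) := inferInstance
    have hfint : Integrable (fun ω' => ((Scard X (i + 1) ω' : ℕ) : ℝ)) μ := integrable_scard hX _
    set g : Ω → ℝ := fun ω => 2 ^ (i + 1) * etaCoef ν i + gammaCoef ν i * (Scard X i ω : ℝ)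
      with hg_def
    have hScard_m : Measurable[upToField X i] fun ω => ((Scard X i ω : ℕ) : ℝ) :=
      measurable_scard_real fun w hw => measurable_X_upTo (le_of_eq (mem_words.mp hw))
    have hgmeas : StronglyMeasurable[upToField X i] g :=
      (measurable_const.add (measurable_const.mul hScard_m)).stronglyMeasurable
    have hgint : Integrable g μ :=
      (integrable_const _).add ((integrable_scard hX i).const_mul _)
    have hreal : ∀ B : Set Ω, MeasurableSet[upToField X i] B →
        ∫ ω in B, ((Scard X (i + 1) ω : ℕ) : ℝ) ∂μ ≤ ∫ ω in B, g ω ∂μ := by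
      intro B hB
      have hkey := key_lintegral hX hν hM i hB
      have hfin1 : (2:ℝ≥0∞) ^ (i + 1) * etaE ν i * μ B ≠ ∞ :=
        ENNReal.mul_ne_top (ENNReal.mul_ne_top (ENNReal.pow_ne_top ENNReal.ofNat_ne_top)
          etaE_ne_top) (measure_ne_top μ B)
      have hfinL : ∫⁻ ω in B, ((Scard X i ω : ℕ) : ℝ≥0∞) ∂μ ≠ ∞ :=
        ((lintegral_scard_le hX i B).trans_lt (by
          exact ENNReal.mul_lt_top (ENNReal.pow_lt_top (by norm_num))
            (measure_lt_top μ B))).ne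
      have hfin2 : gamE ν i * ∫⁻ ω in B, ((Scard X i ω : ℕ) : ℝ≥0∞) ∂μ ≠ ∞ :=
        ENNReal.mul_ne_top (gamE_ne_top hν) hfinL
      have hRHS : ∫ ω in B, g ω ∂μ
          = (2 ^ (i + 1) * etaE ν i * μ B
              + gamE ν i * ∫⁻ ω in B, ((Scard X i ω : ℕ) : ℝ≥0∞) ∂μ).toReal := by
        rw [hg_def]
        rw [integral_add (integrable_const _) (((integrable_scard hX i).const_mul _).integrableOn)]
        rw [setIntegral_const, integral_const_mul, ENNReal.toReal_add hfin1 hfin2,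
          ENNReal.toReal_mul, ENNReal.toReal_mul, ENNReal.toReal_mul, etaE_toReal hν,
          gamE_toReal hν, ENNReal.toReal_pow, ENNReal.toReal_ofNat,
          ← integral_scard_eq hX i (μ.restrict B)]
        rw [smul_eq_mul, measureReal_def]
        ring
      rw [integral_scard_eq hX _ (μ.restrict B), hRHS]
      exact ENNReal.toReal_mono (ENNReal.add_ne_top.2 ⟨hfin1, hfin2⟩) hkey
    have hle : (μ[(fun ω' => ((Scard X (i + 1) ω' : ℕ) : ℝ)) | upToField X i]) ≤ᵐ[μ.trim hm] g := by
      refine ae_le_of_forall_setIntegral_le (integrable_condExp.trim hm stronglyMeasurable_condExp)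
        (hgint.trim hm hgmeas) fun s hs _ => ?_
      rw [← setIntegral_trim hm stronglyMeasurable_condExp hs, ← setIntegral_trim hm hgmeas hs,
        setIntegral_condExp hm hfint hs]
      exact hreal s hs
    filter_upwards [ae_le_of_ae_le_trim hle] with ω hω
    exact hω
  · intro j
    have hLB := lintegral_scard_bound hX hν hM j
    rw [integral_scard_eq hX j μ, ← rhsE_toReal hν]
    exact ENNReal.toReal_mono (rhsE_ne_top hν j) hLB
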